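/- arXiv:math/0303067 — 2 statements merged into one kernel-verified Lean document; each statement's English description precedes it below -/
import Mathlib

section
/- Let q > 1 be a real number, and let C be a convex cone in ℝⁿ (with the standard inner product) whose interior is nonempty. For every interior point s of C, the family y ↦ q^{−⟨y, s⟩}, indexed by the lattice points y ∈ C^∨ ∩ ℤⁿ of the dual cone, is summable. -/
lemma pi_summable_aux {h : ℤ → ℝ} (h0 : ∀ k, 0 ≤ h k) (hs : Summable h) (n : ℕ) :
    Summable fun y : Fin n → ℤ => ∏ i, h (y i) := by
  induction n with
  | zero => exact .of_finite
  | succ n ih =>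
    have key : Summable fun p : ℤ × (Fin n → ℤ) => h p.1 * ∏ i, h (p.2 i) :=
      Summable.mul_of_nonneg (f := h) (g := fun y : Fin n → ℤ => ∏ i, h (y i)) hs ih
        h0 (fun y => Finset.prod_nonneg fun i _ => h0 _)
    have := key.comp_injective (Fin.consEquiv (fun _ : Fin (n+1) => ℤ)).symm.injective
    simpa [Fin.prod_univ_succ, Function.comp_def, Fin.tail] using this


/-- For `q > 1` and a convex cone `C ⊆ ℝⁿ` with nonempty interior, the family
`y ↦ q^{−⟨y,s⟩}` indexed by the lattice points of the dual cone is summable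
whenever `s` is interior to `C`. -/
theorem stmt_4 (q : ℝ) (hq : 1 < q) (n : ℕ)
    (C : ConvexCone ℝ (EuclideanSpace ℝ (Fin n)))
    (hC : (interior (C : Set (EuclideanSpace ℝ (Fin n)))).Nonempty)
    (s : EuclideanSpace ℝ (Fin n))
    (hs : s ∈ interior (C : Set (EuclideanSpace ℝ (Fin n)))) :
    Summable fun y : {y : Fin n → ℤ //
        ∀ x ∈ C, (0:ℝ) ≤ inner ℝ x
          ((WithLp.equiv 2 (Fin n → ℝ)).symm fun i => (y i : ℝ))} =>
      q ^ (-(inner ℝ ((WithLp.equiv 2 (Fin n → ℝ)).symm fun i => ((y : Fin n → ℤ) i : ℝ)) s : ℝ)) := by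
  have hq0 : (0:ℝ) < q := lt_trans one_pos hq
  obtain ⟨ε, hε, hball⟩ := Metric.mem_nhds_iff.mp (mem_interior_iff_mem_nhds.mp hs)
  set c : ℝ := ε / (2 * (n + 1)) with hc
  have hcpos : 0 < c := by positivity
  set r : ℝ := q ^ (-c) with hr
  have hr0 : 0 ≤ r := (Real.rpow_pos_of_pos hq0 _).le
  have hr1 : r < 1 := Real.rpow_lt_one_of_one_lt_of_neg hq (by linarith)
  set h : ℤ → ℝ := fun k => r ^ k.natAbs with hh
  have hsum : Summable h := by
    apply Summable.of_nat_of_neg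
    · simpa [hh] using summable_geometric_of_lt_one hr0 hr1
    · simpa [hh] using summable_geometric_of_lt_one hr0 hr1
  have base : Summable fun y : {y : Fin n → ℤ //
        ∀ x ∈ C, (0:ℝ) ≤ inner ℝ x
          ((WithLp.equiv 2 (Fin n → ℝ)).symm fun i => (y i : ℝ))} =>
      ∏ i, h ((y : Fin n → ℤ) i) :=
    (pi_summable_aux (fun k => pow_nonneg hr0 _) hsum n).comp_injective Subtype.val_injective
  refine Summable.of_nonneg_of_le (fun y => (Real.rpow_pos_of_pos hq0 _).le) (fun y => ?_) base
  set v : EuclideanSpace ℝ (Fin n) :=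
    (WithLp.equiv 2 (Fin n → ℝ)).symm fun i => ((y : Fin n → ℤ) i : ℝ) with hv
  -- geometric estimate
  have key : (ε/2) * ‖v‖ ≤ inner ℝ v s := by
    rcases eq_or_ne v 0 with h0 | h0
    · simp [h0]
    · have hvn : 0 < ‖v‖ := norm_pos_iff.mpr h0
      have hmem : s - (ε/2) • (‖v‖⁻¹ • v) ∈ C := by
        apply hball
        have : ‖(ε/2) • (‖v‖⁻¹ • v)‖ = ε/2 := by
          rw [norm_smul, norm_smul, norm_inv, norm_norm, inv_mul_cancel₀ hvn.ne',
            mul_one, Real.norm_eq_abs, abs_of_pos (by linarith)]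
        simp only [Metric.mem_ball, dist_eq_norm, sub_sub_cancel_left, norm_neg]
        rw [this]; linarith
      have hd := y.2 _ hmem
      rw [← hv] at hd
      rw [inner_sub_left, real_inner_smul_left, real_inner_smul_left,
        real_inner_self_eq_norm_sq] at hd
      have : (ε/2) * (‖v‖⁻¹ * ‖v‖^2) = (ε/2) * ‖v‖ := by
        field_simp
      rw [real_inner_comm]
      nlinarith [hd]
  -- coordinate bound
  have habs : ∀ i, (((y : Fin n → ℤ) i).natAbs : ℝ) ≤ ‖v‖ := by
    intro i
    have h1 : |((y : Fin n → ℤ) i : ℝ)| ^ 2 ≤ ∑ j, ‖v j‖ ^ 2 := by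
      have := Finset.single_le_sum (f := fun j => ‖v j‖ ^ 2)
        (fun j _ => sq_nonneg _) (Finset.mem_univ i)
      simpa [hv, Real.norm_eq_abs, sq_abs, WithLp.equiv_symm_apply, PiLp.toLp_apply] using this
    have := Real.sqrt_le_sqrt h1
    rw [Real.sqrt_sq_eq_abs, abs_abs] at this
    calc (((y : Fin n → ℤ) i).natAbs : ℝ) = |((y : Fin n → ℤ) i : ℝ)| := by
          simp [Nat.cast_natAbs]
      _ ≤ Real.sqrt (∑ j, ‖v j‖ ^ 2) := this
      _ = ‖v‖ := by rw [EuclideanSpace.norm_eq]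
  set N : ℕ := ∑ i, ((y : Fin n → ℤ) i).natAbs with hN
  have hNle : (N : ℝ) ≤ (n + 1) * ‖v‖ := by
    have : (N : ℝ) = ∑ i, (((y : Fin n → ℤ) i).natAbs : ℝ) := by push_cast [hN]; ring
    rw [this]
    calc ∑ i, (((y : Fin n → ℤ) i).natAbs : ℝ) ≤ ∑ _i : Fin n, ‖v‖ :=
          Finset.sum_le_sum fun i _ => habs i
      _ = n * ‖v‖ := by simp [Finset.sum_const, nsmul_eq_mul]
      _ ≤ (n + 1) * ‖v‖ := by nlinarith [norm_nonneg v]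
  have hprod : ∏ i, h ((y : Fin n → ℤ) i) = q ^ (-(c * N)) := by
    rw [hh]
    simp only []
    rw [Finset.prod_pow_eq_pow_sum, ← hN, hr, ← Real.rpow_natCast (q ^ (-c)) N,
      ← Real.rpow_mul hq0.le]
    ring_nf
  rw [hprod]
  apply Real.rpow_le_rpow_of_exponent_le hq.le
  rw [neg_le_neg_iff]
  calc c * N ≤ c * ((n + 1) * ‖v‖) := by
        exact mul_le_mul_of_nonneg_left hNle hcpos.le
    _ = (ε/2) * ‖v‖ := by rw [hc]; field_simp
    _ ≤ inner ℝ v s := key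
end

section
/- Let q > 1 be a real number and let C be a convex cone in ℝⁿ (with the standard inner product) with nonempty interior. Then the function F(s) = ∑_{y ∈ C^∨ ∩ ℤⁿ} exp(−(log q)·∑_{i=1}^n y_i·s_i) is complex-differentiable (holomorphic) on the open set {s ∈ ℂⁿ : (Re s₁, …, Re s_n) lies in the interior of C}. -/
lemma sum_int_exp (b : ℝ) (hb : 0 < b) : Summable (fun m : ℤ => Real.exp (-b * |(m : ℝ)|)) := by
  have hlt : Real.exp (-b) < 1 := Real.exp_lt_one_iff.mpr (by linarith)
  have hnat : Summable (fun k : ℕ => Real.exp (-b * k)) := by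
    have : (fun k : ℕ => Real.exp (-b * k)) = fun k => Real.exp (-b) ^ k := by
      ext k; rw [← Real.exp_nat_mul]; ring_nf
    rw [this]
    exact summable_geometric_of_lt_one (Real.exp_nonneg (-b)) hlt
  apply Summable.of_nat_of_neg <;> simpa using hnat

lemma sum_pi_exp (b : ℝ) (hb : 0 < b) (n : ℕ) :
    Summable (fun y : Fin n → ℤ => ∏ i, Real.exp (-b * |((y i : ℤ) : ℝ)|)) := by
  induction n with
  | zero => exact summable_of_finite_support (Set.toFinite _)
  | succ n ih =>
    have h := ((sum_int_exp b hb).mul_of_nonneg ih (fun m => (Real.exp_pos _).le)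
      (fun y => Finset.prod_nonneg fun i _ => (Real.exp_pos _).le))
    have h2 := ((Fin.consEquiv (fun _ : Fin (n+1) => ℤ)).symm.summable_iff
      (f := fun p : ℤ × (Fin n → ℤ) =>
        Real.exp (-b * |(p.1 : ℝ)|) * ∏ i, Real.exp (-b * |((p.2 i : ℤ) : ℝ)|))).mpr h
    convert h2 using 1
    ext y
    simp [Fin.consEquiv, Fin.prod_univ_succ, Function.comp, Fin.tail]

lemma abs_coord_le {n : ℕ} (v : EuclideanSpace ℝ (Fin n)) (i : Fin n) : |v i| ≤ ‖v‖ := by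
  rw [EuclideanSpace.norm_eq, ← Real.sqrt_sq_eq_abs]
  apply Real.sqrt_le_sqrt
  rw [show v i ^ 2 = ‖v i‖ ^ 2 by rw [Real.norm_eq_abs, sq_abs]]
  exact Finset.single_le_sum (f := fun j => ‖v j‖ ^ 2) (fun j _ => sq_nonneg _) (Finset.mem_univ i)

lemma cone_inner_bound {n : ℕ} (C : ConvexCone ℝ (EuclideanSpace ℝ (Fin n)))
    {x₀ : EuclideanSpace ℝ (Fin n)} (hx : x₀ ∈ interior (C : Set (EuclideanSpace ℝ (Fin n)))) :
    ∃ κ > (0:ℝ), ∀ v : EuclideanSpace ℝ (Fin n),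
      (∀ x ∈ C, (0:ℝ) ≤ inner ℝ x v) → κ * ‖v‖ ≤ inner ℝ x₀ v := by
  obtain ⟨δ, hδ, hball⟩ := Metric.isOpen_iff.mp isOpen_interior x₀ hx
  refine ⟨δ/2, by linarith, fun v hv => ?_⟩
  rcases eq_or_ne v 0 with rfl | hv0
  · simp
  · have hvn : (0:ℝ) < ‖v‖ := norm_pos_iff.mpr hv0
    have hx' : x₀ - ((δ/2) / ‖v‖) • v ∈ (C : Set (EuclideanSpace ℝ (Fin n))) := by
      apply interior_subset
      apply hball
      rw [Metric.mem_ball, dist_eq_norm]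
      have : x₀ - (δ / 2 / ‖v‖) • v - x₀ = -((δ / 2 / ‖v‖) • v) := by abel
      rw [this, norm_neg, norm_smul, Real.norm_eq_abs,
        abs_of_nonneg (by positivity : (0:ℝ) ≤ δ / 2 / ‖v‖)]
      rw [div_mul_cancel₀ _ hvn.ne']
      linarith
    have h0 := hv _ hx'
    rw [inner_sub_left, real_inner_smul_left, real_inner_self_eq_norm_sq] at h0
    have : δ / 2 / ‖v‖ * ‖v‖ ^ 2 = δ / 2 * ‖v‖ := by
      field_simp
    rw [this] at h0
    linarith

set_option maxHeartbeats 1000000 in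
/-- The series `F(s) = ∑_{y ∈ C^∨ ∩ ℤⁿ} exp(−log q·∑ y_i s_i)` defines a
holomorphic function on the tube over the interior of the convex cone `C`. -/
theorem stmt_10 (q : ℝ) (hq : 1 < q) (n : ℕ)
    (C : ConvexCone ℝ (EuclideanSpace ℝ (Fin n)))
    (hC : (interior (C : Set (EuclideanSpace ℝ (Fin n)))).Nonempty) :
    DifferentiableOn ℂ
      (fun s : Fin n → ℂ =>
        ∑' y : {y : Fin n → ℤ //
            ∀ x ∈ C, (0:ℝ) ≤ inner ℝ x
              ((WithLp.equiv 2 (Fin n → ℝ)).symm fun i => (y i : ℝ))},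
          Complex.exp (-((Real.log q : ℂ) * ∑ i, ((y : Fin n → ℤ) i : ℂ) * s i)))
      {s : Fin n → ℂ |
        ((WithLp.equiv 2 (Fin n → ℝ)).symm fun i => (s i).re) ∈
          interior (C : Set (EuclideanSpace ℝ (Fin n)))} := by
  set a : ℝ := Real.log q with ha_def
  have ha : 0 < a := Real.log_pos hq
  set Y := {y : Fin n → ℤ //
      ∀ x ∈ C, (0:ℝ) ≤ inner ℝ x ((WithLp.equiv 2 (Fin n → ℝ)).symm fun i => (y i : ℝ))} with hY
  set L : Y → (Fin n → ℂ) →L[ℂ] ℂ := fun y =>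
    ∑ i, ((-(a:ℂ)) * ((y : Fin n → ℤ) i : ℂ)) • ContinuousLinearMap.proj i with hL
  have hLapp : ∀ (y : Y) (s : Fin n → ℂ),
      L y s = -((a : ℂ) * ∑ i, ((y : Fin n → ℤ) i : ℂ) * s i) := by
    intro y s
    simp only [hL, ContinuousLinearMap.sum_apply, ContinuousLinearMap.smul_apply,
      ContinuousLinearMap.proj_apply, smul_eq_mul, Finset.mul_sum, neg_mul,
      ← Finset.sum_neg_distrib]
    refine Finset.sum_congr rfl fun i _ => by ring
  -- rewrite the goal in terms of L
  have hfun : (fun s : Fin n → ℂ =>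
      ∑' y : Y, Complex.exp (-((a : ℂ) * ∑ i, ((y : Fin n → ℤ) i : ℂ) * s i))) =
      fun s : Fin n → ℂ => ∑' y : Y, Complex.exp (L y s) := by
    funext s
    exact tsum_congr fun y => by rw [hLapp]
  rw [hfun]
  -- norm of the individual terms
  have hnorm : ∀ (y : Y) (s : Fin n → ℂ),
      ‖Complex.exp (L y s)‖ =
        Real.exp (-(a * ∑ i, (((y : Fin n → ℤ) i : ℝ)) * (s i).re)) := by
    intro y s
    rw [hLapp, Complex.norm_exp]
    congr 1
    rw [Complex.neg_re, Complex.mul_re, Complex.ofReal_re, Complex.ofReal_im, zero_mul, sub_zero,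
      Complex.re_sum]
    congr 2
    refine Finset.sum_congr rfl fun i _ => ?_
    simp [Complex.mul_re]
  intro s₀ hs₀
  obtain ⟨κ, hκ, hcone⟩ := cone_inner_bound C hs₀
  set v : Y → EuclideanSpace ℝ (Fin n) := fun y =>
    (WithLp.equiv 2 (Fin n → ℝ)).symm fun i => ((y : Fin n → ℤ) i : ℝ) with hv
  have hvy : ∀ y : Y, κ * ‖v y‖ ≤ ∑ i, ((y : Fin n → ℤ) i : ℝ) * (s₀ i).re := by
    intro y
    have h := hcone (v y) y.2
    have : (inner ℝ ((WithLp.equiv 2 (Fin n → ℝ)).symm fun i => (s₀ i).re) (v y) : ℝ)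
        = ∑ i, ((y : Fin n → ℤ) i : ℝ) * (s₀ i).re := by
      simp [hv, PiLp.inner_apply, RCLike.inner_apply, WithLp.equiv_symm_apply, PiLp.toLp_apply, mul_comm]
    rw [this] at h
    exact h
  have habs : ∀ (y : Y) (i : Fin n), |((y : Fin n → ℤ) i : ℝ)| ≤ ‖v y‖ := by
    intro y i
    simpa [hv, WithLp.equiv_symm_apply, PiLp.toLp_apply] using abs_coord_le (v y) i
  have hsum_abs : ∀ y : Y, ∑ i, |((y : Fin n → ℤ) i : ℝ)| ≤ (n + 1) * ‖v y‖ := by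
    intro y
    calc ∑ i, |((y : Fin n → ℤ) i : ℝ)| ≤ ∑ _i : Fin n, ‖v y‖ :=
          Finset.sum_le_sum fun i _ => habs y i
      _ = n * ‖v y‖ := by simp [mul_comm]
      _ ≤ (n + 1) * ‖v y‖ := by
          have := norm_nonneg (v y); nlinarith
  set ε : ℝ := κ / (2 * (n + 1)) with hε_def
  have hε : 0 < ε := by positivity
  set B := Metric.ball s₀ ε with hB
  have hkey : ∀ s ∈ B, ∀ y : Y,
      (κ / 2) * ‖v y‖ ≤ ∑ i, ((y : Fin n → ℤ) i : ℝ) * (s i).re := by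
    intro s hs y
    have hdiff : ∀ i, |(s i).re - (s₀ i).re| ≤ ε := by
      intro i
      have h1 : |(s i).re - (s₀ i).re| ≤ ‖s i - s₀ i‖ := by
        simpa using Complex.abs_re_le_norm (s i - s₀ i)
      have h2 : ‖s i - s₀ i‖ ≤ dist s s₀ := by
        have := norm_le_pi_norm (s - s₀) i
        simpa [dist_eq_norm] using this
      have h3 : dist s s₀ < ε := Metric.mem_ball.mp hs
      linarith
    have step : ∑ i, ((y : Fin n → ℤ) i : ℝ) * (s i).re
        ≥ ∑ i, ((y : Fin n → ℤ) i : ℝ) * (s₀ i).re - ε * ∑ i, |((y : Fin n → ℤ) i : ℝ)| := by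
      have : ∀ i ∈ Finset.univ, ((y : Fin n → ℤ) i : ℝ) * (s₀ i).re
          - ε * |((y : Fin n → ℤ) i : ℝ)| ≤ ((y : Fin n → ℤ) i : ℝ) * (s i).re := by
        intro i _
        have h1 : |((y : Fin n → ℤ) i : ℝ) * ((s i).re - (s₀ i).re)|
            ≤ |((y : Fin n → ℤ) i : ℝ)| * ε := by
          rw [abs_mul]
          exact mul_le_mul_of_nonneg_left (hdiff i) (abs_nonneg _)
        have h2 := neg_abs_le (((y : Fin n → ℤ) i : ℝ) * ((s i).re - (s₀ i).re))
        nlinarith [abs_nonneg (((y : Fin n → ℤ) i : ℝ))]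
      have := Finset.sum_le_sum this
      rw [Finset.sum_sub_distrib, ← Finset.mul_sum] at this
      linarith
    have h4 := hvy y
    have h5 : ε * ∑ i, |((y : Fin n → ℤ) i : ℝ)| ≤ ε * ((n + 1) * ‖v y‖) :=
      mul_le_mul_of_nonneg_left (hsum_abs y) hε.le
    have h6 : ε * ((n + 1) * ‖v y‖) = (κ / 2) * ‖v y‖ := by
      rw [hε_def]; field_simp
    linarith
  set b : ℝ := a * κ / (4 * (n + 1)) with hb_def
  have hb : 0 < b := by positivity
  have hbκ : 2 * b * (n + 1) = a * κ / 2 := by rw [hb_def]; field_simp; ring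
  -- pointwise norm bound on B
  have hbound1 : ∀ s ∈ B, ∀ y : Y,
      ‖Complex.exp (L y s)‖ ≤ Real.exp (-(2 * b) * ∑ i, |((y : Fin n → ℤ) i : ℝ)|) := by
    intro s hs y
    rw [hnorm]
    apply Real.exp_le_exp.mpr
    have h1 := hkey s hs y
    have h2 := hsum_abs y
    have h3 : a * ((κ / 2) * ‖v y‖) ≤ a * ∑ i, ((y : Fin n → ℤ) i : ℝ) * (s i).re :=
      mul_le_mul_of_nonneg_left h1 ha.le
    have h4 : (2 * b) * ∑ i, |((y : Fin n → ℤ) i : ℝ)| ≤ (2 * b) * ((n+1) * ‖v y‖) :=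
      mul_le_mul_of_nonneg_left h2 (by positivity)
    have h5 : (2 * b) * ((n+1) * ‖v y‖) = a * ((κ / 2) * ‖v y‖) := by
      rw [hb_def]; field_simp; ring
    linarith
  -- operator norm bound for L y
  have hLnorm : ∀ y : Y, ‖L y‖ ≤ a * ∑ i, |((y : Fin n → ℤ) i : ℝ)| := by
    intro y
    apply ContinuousLinearMap.opNorm_le_bound _ (by positivity)
    intro s
    rw [hLapp, norm_neg]
    calc ‖(a:ℂ) * ∑ i, ((y : Fin n → ℤ) i : ℂ) * s i‖
        = ‖(a:ℂ)‖ * ‖∑ i, ((y : Fin n → ℤ) i : ℂ) * s i‖ := norm_mul _ _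
      _ ≤ a * ∑ i, ‖((y : Fin n → ℤ) i : ℂ) * s i‖ := by
          rw [Complex.norm_real, Real.norm_eq_abs, abs_of_pos ha]
          exact mul_le_mul_of_nonneg_left (norm_sum_le _ _) ha.le
      _ ≤ a * ∑ i, |((y : Fin n → ℤ) i : ℝ)| * ‖s‖ := by
          apply mul_le_mul_of_nonneg_left _ ha.le
          apply Finset.sum_le_sum
          intro i _
          rw [norm_mul]
          have h1 : ‖((y : Fin n → ℤ) i : ℂ)‖ = |((y : Fin n → ℤ) i : ℝ)| := by
            rw [show ((y : Fin n → ℤ) i : ℂ) = (((y : Fin n → ℤ) i : ℝ) : ℂ) by push_cast; rfl,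
              Complex.norm_real, Real.norm_eq_abs]
          rw [h1]
          exact mul_le_mul_of_nonneg_left (norm_le_pi_norm s i) (abs_nonneg _)
      _ = a * ∑ i, |((y : Fin n → ℤ) i : ℝ)| * ‖s‖ := rfl
      _ = a * (∑ i, |((y : Fin n → ℤ) i : ℝ)|) * ‖s‖ := by
          rw [← Finset.sum_mul]; ring
  have hprod : ∀ y : Y, ∏ i, Real.exp (-b * |((y : Fin n → ℤ) i : ℝ)|)
      = Real.exp (-b * ∑ i, |((y : Fin n → ℤ) i : ℝ)|) := by
    intro y
    rw [← Real.exp_sum, Finset.mul_sum]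
  -- derivative bound on B
  have hbound2 : ∀ y : Y, ∀ s ∈ B,
      ‖Complex.exp (L y s) • L y‖
        ≤ (a / b) * ∏ i, Real.exp (-b * |((y : Fin n → ℤ) i : ℝ)|) := by
    intro y s hs
    refine le_trans (ContinuousLinearMap.opNorm_smul_le _ _) ?_
    rw [hprod]
    set t : ℝ := ∑ i, |((y : Fin n → ℤ) i : ℝ)| with ht
    have ht0 : 0 ≤ t := Finset.sum_nonneg fun i _ => abs_nonneg _
    have h1 := hbound1 s hs y
    have h2 := hLnorm y
    have e1 : Real.exp (-(2 * b) * t) = Real.exp (-b * t) * Real.exp (-b * t) := by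
      rw [← Real.exp_add]; ring_nf
    have e2 : b * t ≤ Real.exp (b * t) := by linarith [Real.add_one_le_exp (b * t)]
    have e4 : t * Real.exp (-b * t) ≤ 1 / b := by
      rw [show -b * t = -(b * t) by ring, Real.exp_neg, mul_inv_le_iff₀ (Real.exp_pos _)]
      rw [div_mul_eq_mul_div, le_div_iff₀ hb]
      linarith
    have hLpos : (0:ℝ) ≤ ‖L y‖ := norm_nonneg _
    calc ‖Complex.exp (L y s)‖ * ‖L y‖
        ≤ Real.exp (-(2 * b) * t) * (a * t) := by
          apply mul_le_mul h1 h2 hLpos (Real.exp_nonneg _)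
      _ = a * (t * Real.exp (-b * t)) * Real.exp (-b * t) := by rw [e1]; ring
      _ ≤ a * (1 / b) * Real.exp (-b * t) := by
          apply mul_le_mul_of_nonneg_right _ (Real.exp_nonneg _)
          exact mul_le_mul_of_nonneg_left e4 ha.le
      _ = (a / b) * Real.exp (-b * t) := by ring
  -- summability
  have hsumY : Summable (fun y : Y => ∏ i, Real.exp (-b * |((y : Fin n → ℤ) i : ℝ)|)) :=
    (sum_pi_exp b hb n).subtype _
  have hu : Summable (fun y : Y => (a / b) * ∏ i, Real.exp (-b * |((y : Fin n → ℤ) i : ℝ)|)) :=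
    hsumY.mul_left _
  have hsum_terms : ∀ s ∈ B, Summable (fun y : Y => Complex.exp (L y s)) := by
    intro s hs
    apply Summable.of_norm_bounded hsumY
    intro y
    rw [hprod]
    refine (hbound1 s hs y).trans (Real.exp_le_exp.mpr ?_)
    have ht0 : (0:ℝ) ≤ ∑ i, |((y : Fin n → ℤ) i : ℝ)| :=
      Finset.sum_nonneg fun i _ => abs_nonneg _
    nlinarith
  -- the main derivative statement
  have key : HasFDerivAt (fun s : Fin n → ℂ => ∑' y : Y, Complex.exp (L y s))
      (∑' y : Y, Complex.exp (L y s₀) • L y) s₀ := by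
    apply hasFDerivAt_of_tendstoLocallyUniformlyOn (Metric.isOpen_ball : IsOpen B)
      (f := fun (t : Finset Y) (s : Fin n → ℂ) => ∑ y ∈ t, Complex.exp (L y s))
      (f' := fun (t : Finset Y) (s : Fin n → ℂ) => ∑ y ∈ t, Complex.exp (L y s) • L y)
      (g' := fun s : Fin n → ℂ => ∑' y : Y, Complex.exp (L y s) • L y)
      (l := Filter.atTop)
    · exact (tendstoUniformlyOn_tsum hu
        (fun y s hs => hbound2 y s hs)).tendstoLocallyUniformlyOn
    · intro t x hx
      exact HasFDerivAt.fun_sum fun y _ => ((L y).hasFDerivAt (x := x)).cexp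
    · intro x hx
      exact (hsum_terms x hx).hasSum
    · exact Metric.mem_ball_self hε
  exact key.differentiableAt.differentiableWithinAt
end
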